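/- Let β = β_{σ,ρ} and let v be a factor of s_{σ,ρ} of length n occurring at position giving canonical representative values ({τ}, {τ+σ}, …, {τ+nσ}). If the order relation between the first and last element of β^v can be reversed while preserving all other pairwise relations (yielding a valid distinct permutation pattern), then all numbers {τ+iσ} for 0 < i < n lie outside the open interval with endpoints {τ} and {τ+nσ}. -/
import Mathlib


open Filter

/-- `a` is a representative of the infinite permutation (linear order on ℕ) `r`. -/
def Represents (a : ℕ → ℝ) (r : ℕ → ℕ → Prop) : Prop :=
  ∀ i j : ℕ, r i j ↔ a i < a j

/-- An equidistributed sequence of pairwise distinct reals in `[0,1]`. -/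
def EquidistSeq (a : ℕ → ℝ) : Prop :=
  (∀ n, a n ∈ Set.Icc (0:ℝ) 1) ∧ Function.Injective a ∧
    ∀ t ∈ Set.Icc (0:ℝ) 1,
      Tendsto (fun n => (((Finset.range n).filter fun i => a i < t).card : ℝ) / n)
        atTop (nhds t)

/-- An equidistributed infinite permutation. -/
def EquidistPerm (r : ℕ → ℕ → Prop) : Prop :=
  ∃ a : ℕ → ℝ, EquidistSeq a ∧ Represents a r

/-- `r` has an `N`-monotone subpermutation. -/
def HasNMonotone (r : ℕ → ℕ → Prop) (N : ℕ) : Prop :=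
  ∃ n : ℕ → ℕ, StrictMono n ∧ (∀ i, n (i+1) - n i ≤ N) ∧
    ((∀ i, r (n i) (n (i+1))) ∨ (∀ i, r (n (i+1)) (n i)))

/-- `r` is ultimately `t`-periodic. -/
def UltPeriodicPerm (r : ℕ → ℕ → Prop) (t : ℕ) : Prop :=
  ∃ n0 : ℕ, ∀ i ≥ n0, ∀ j ≥ n0, (r i j ↔ r (i+t) (j+t))

/-- `α[i]` is an `N`-maximal element of `r`. -/
def NMaximal (r : ℕ → ℕ → Prop) (N i : ℕ) : Prop :=
  N < i ∧ ∀ j, j ≠ i → i ≤ j + N → j ≤ i + N → r j i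

/-- `α[i]` is an `N`-minimal element of `r`. -/
def NMinimal (r : ℕ → ℕ → Prop) (N i : ℕ) : Prop :=
  N < i ∧ ∀ j, j ≠ i → i ≤ j + N → j ≤ i + N → r i j

/-- The factor (order type) of length `n` of `r` at position `m`. -/
def permFactor (r : ℕ → ℕ → Prop) (m n : ℕ) : Fin n → Fin n → Prop :=
  fun k l => r (m + (k : ℕ)) (m + (l : ℕ))

/-- The factor complexity of an infinite permutation. -/
noncomputable def permComplexity (r : ℕ → ℕ → Prop) (n : ℕ) : ℕ :=
  Set.ncard {f : Fin n → Fin n → Prop | ∃ m, f = permFactor r m n}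

open Classical in
/-- The underlying binary word of an infinite permutation. -/
noncomputable def underlying (r : ℕ → ℕ → Prop) : ℕ → ℕ :=
  fun i => if r i (i+1) then 0 else 1

/-- The factor of length `n` of the infinite word `w` at position `m`. -/
def factorAt (w : ℕ → ℕ) (m n : ℕ) : List ℕ :=
  (List.range n).map fun k => w (m + k)

/-- `u` is a factor of the infinite word `w`. -/
def IsFactor (w : ℕ → ℕ) (u : List ℕ) : Prop :=
  ∃ m, u = factorAt w m u.length

/-- The factor complexity of an infinite word. -/
noncomputable def wordComplexity (w : ℕ → ℕ) (n : ℕ) : ℕ :=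
  Set.ncard {u : List ℕ | ∃ m, u = factorAt w m n}

def LeftSpecial (w : ℕ → ℕ) (u : List ℕ) : Prop :=
  IsFactor w (0 :: u) ∧ IsFactor w (1 :: u)

def RightSpecial (w : ℕ → ℕ) (u : List ℕ) : Prop :=
  IsFactor w (u ++ [0]) ∧ IsFactor w (u ++ [1])

def Bispecial (w : ℕ → ℕ) (u : List ℕ) : Prop :=
  LeftSpecial w u ∧ RightSpecial w u

/-- A Christoffel word for `w`: `0b1` or `1b0` with `b` a bispecial factor of `w`. -/
def IsChristoffel (w : ℕ → ℕ) (u : List ℕ) : Prop :=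
  ∃ b, Bispecial w b ∧ (u = 0 :: (b ++ [1]) ∨ u = 1 :: (b ++ [0]))

/-- The Sturmian word `s_{σ,ρ}`. -/
noncomputable def sturmianWord (σ ρ : ℝ) : ℕ → ℕ :=
  fun k => if Int.fract (ρ + (k : ℝ) * σ) < 1 - σ then 0 else 1

/-- The word `w` is ultimately `p`-periodic. -/
def UltPeriodicWord (w : ℕ → ℕ) (p : ℕ) : Prop :=
  ∃ N : ℕ, ∀ i ≥ N, w (i + p) = w i

/-- The word defined by `s[k] = ⌊(k+1)σ⌋ − ⌊kσ⌋`. -/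
noncomputable def floorWord (σ : ℝ) : ℕ → ℕ :=
  fun k => (⌊((k : ℝ) + 1) * σ⌋ - ⌊(k : ℝ) * σ⌋).toNat


theorem stmt18 (σ ρ : ℝ) (hirr : Irrational σ) (h0 : 0 < σ) (h1 : σ < 1)
    (m n : ℕ) (hn : 1 ≤ n) (b : ℕ → ℝ)
    (hb : ∀ k : ℕ, b k = Int.fract (ρ + ((m + k : ℕ) : ℝ) * σ))
    (hrev : ∃ c : Fin (n + 1) → ℝ, Function.Injective c ∧
      (∀ k l : Fin (n + 1),
        ¬ ((k = 0 ∧ l = Fin.last n) ∨ (k = Fin.last n ∧ l = 0)) →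
          (c k < c l ↔ b (k : ℕ) < b (l : ℕ))) ∧
      (c 0 < c (Fin.last n) ↔ ¬ b 0 < b n)) :
    ∀ i : ℕ, 0 < i → i < n →
      b i ∉ Set.Ioo (min (b 0) (b n)) (max (b 0) (b n)) := by
  intro i hi0 hin hmem
  obtain ⟨c, hcinj, hc, hlast⟩ := hrev
  have hin' : i < n + 1 := Nat.lt_succ_of_lt hin
  set i' : Fin (n + 1) := ⟨i, hin'⟩ with hi'def
  have hne0 : i' ≠ 0 := by
    simp [hi'def, Fin.ext_iff, hi0.ne']
  have hnel : i' ≠ Fin.last n := by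
    simp [hi'def, Fin.ext_iff, hin.ne]
  have h0l : (0 : Fin (n + 1)) ≠ Fin.last n := by
    simp [Fin.ext_iff, (Nat.lt_of_lt_of_le Nat.zero_lt_one hn).ne]
  have h1 := hc 0 i' (by
    rintro (⟨-, h⟩ | ⟨h, -⟩)
    · exact hnel h
    · exact h0l h)
  have h2 := hc i' (Fin.last n) (by
    rintro (⟨h, -⟩ | ⟨-, h⟩)
    · exact hne0 h
    · exact h0l h.symm)
  simp only [hi'def, Fin.val_zero, Fin.val_last] at h1 h2 hlast
  obtain ⟨hlo, hhi⟩ := hmem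
  rcases le_or_gt (b 0) (b n) with hbn | hbn
  · rw [min_eq_left hbn] at hlo
    rw [max_eq_right hbn] at hhi
    have hc1 : c 0 < c ⟨i, hin'⟩ := h1.mpr hlo
    have hc2 : c ⟨i, hin'⟩ < c (Fin.last n) := h2.mpr hhi
    exact (hlast.mp (hc1.trans hc2)) (hlo.trans hhi)
  · rw [min_eq_right hbn.le] at hlo
    rw [max_eq_left hbn.le] at hhi
    have hc1 : ¬ c 0 < c ⟨i, hin'⟩ := fun h => absurd (h1.mp h) (not_lt.mpr hhi.le)
    have hc2 : ¬ c ⟨i, hin'⟩ < c (Fin.last n) := fun h => absurd (h2.mp h) (not_lt.mpr hlo.le)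
    have hne1 : c ⟨i, hin'⟩ ≠ c 0 := fun h => hne0 (hcinj h)
    have hne2 : c (Fin.last n) ≠ c ⟨i, hin'⟩ := fun h => hnel (hcinj h).symm
    have : c (Fin.last n) < c 0 :=
      ((not_lt.mp hc2).lt_of_ne hne2).trans ((not_lt.mp hc1).lt_of_ne hne1)
    exact absurd (hlast.mpr (not_lt.mpr hbn.le)) (not_lt.mpr this.le)
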